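/- Let X be an n×p real matrix with rows xᵢ having full column rank p, sᵢ > 0 and mᵢ > 0 for all i, and β ∈ ℝᵖ. Define W(β) = diag(ω(xᵢᵀβ, mᵢ)) and R(β) = diag(mᵢ·π(xᵢᵀβ)(1 − π(xᵢᵀβ))), where π(t) = 1/(1 + exp(−t)). Then both E = XᵀSW(β)X and V = XᵀSR(β)X are symmetric positive definite, and the matrix A = V⁻¹ − E⁻¹ = (XᵀSR(β)X)⁻¹ − (XᵀSW(β)X)⁻¹ is symmetric positive semidefinite. (This is the key matrix comparison in the proof of Theorem 1, following from π(t)(1−π(t)) ≤ tanh(t/2)/(2t).) -/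

import Mathlib

open Matrix

/-- The Pólya-Gamma EM weight function: ω(t,m) = (m/(2t))·tanh(t/2) for t ≠ 0,
and ω(0,m) = m/4. -/
noncomputable def omegaPG (t m : ℝ) : ℝ :=
  if t = 0 then m / 4 else m / (2 * t) * Real.tanh (t / 2)

/-- The logistic function π(t) = 1/(1 + exp(−t)). -/
noncomputable def piLogit (t : ℝ) : ℝ := 1 / (1 + Real.exp (-t))


lemma piLogit_mul (t : ℝ) :
    piLogit t * (1 - piLogit t) = 1 / (4 * Real.cosh (t/2) ^ 2) := by
  have ha : (0:ℝ) < Real.exp (t/2) := Real.exp_pos _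
  have h1 : Real.exp (-t) = Real.exp (-(t/2)) ^ 2 := by
    rw [← Real.exp_nat_mul]; ring_nf
  have h2 : Real.exp (-(t/2)) = (Real.exp (t/2))⁻¹ := Real.exp_neg _
  unfold piLogit
  rw [Real.cosh_eq, h1, h2]
  have h3 : (0:ℝ) < 1 + (Real.exp (t/2))⁻¹ ^ 2 := by positivity
  field_simp
  ring

lemma omegaPG_pos {t m : ℝ} (hm : 0 < m) : 0 < omegaPG t m := by
  unfold omegaPG
  split_ifs with h
  · linarith
  · rcases lt_or_gt_of_ne h with ht | ht
    · have h1 : Real.tanh (t/2) < 0 := by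
        rw [Real.tanh_eq_sinh_div_cosh]
        exact div_neg_of_neg_of_pos (Real.sinh_neg_iff.2 (by linarith)) (Real.cosh_pos _)
      have h2 : m / (2 * t) < 0 := div_neg_of_pos_of_neg hm (by linarith)
      exact mul_pos_of_neg_of_neg h2 h1
    · have h1 : 0 < Real.tanh (t/2) := by
        rw [Real.tanh_eq_sinh_div_cosh]
        exact div_pos (Real.sinh_pos_iff.2 (by linarith)) (Real.cosh_pos _)
      exact mul_pos (div_pos hm (by linarith)) h1

lemma piLogit_mul_pos (t : ℝ) : 0 < piLogit t * (1 - piLogit t) := by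
  rw [piLogit_mul]
  positivity

lemma key_ineq {t m : ℝ} (hm : 0 < m) :
    m * (piLogit t * (1 - piLogit t)) ≤ omegaPG t m := by
  rw [piLogit_mul]
  unfold omegaPG
  split_ifs with h
  · rw [h]; norm_num [Real.cosh_zero]; linarith
  · have hc : (0:ℝ) < Real.cosh (t/2) := Real.cosh_pos _
    have hsinh : Real.sinh t = 2 * Real.sinh (t/2) * Real.cosh (t/2) := by
      rw [← Real.sinh_two_mul]; ring_nf
    rw [Real.tanh_eq_sinh_div_cosh]
    have key : m / (2*t) * (Real.sinh (t/2)/Real.cosh (t/2))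
        - m * (1/(4*Real.cosh (t/2)^2))
        = m * (Real.sinh t - t) / (4*t*Real.cosh (t/2)^2) := by
      rw [hsinh]; field_simp; ring
    rcases lt_or_gt_of_ne h with ht | ht
    · have hb : Real.sinh t ≤ t := (Real.sinh_lt_self_iff.2 ht).le
      have : 0 ≤ m * (Real.sinh t - t) / (4*t*Real.cosh (t/2)^2) :=
        div_nonneg_of_nonpos (by nlinarith) (by nlinarith)
      linarith
    · have hb : t ≤ Real.sinh t := Real.self_le_sinh_iff.2 ht.le
      have : 0 ≤ m * (Real.sinh t - t) / (4*t*Real.cosh (t/2)^2) :=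
        div_nonneg (by nlinarith) (by positivity)
      linarith

lemma mulVec_inj_of_rank {n p : ℕ} (X : Matrix (Fin n) (Fin p) ℝ)
    (hrank : X.rank = p) : Function.Injective X.mulVec := by
  have hker : LinearMap.ker X.mulVecLin = ⊥ → Function.Injective X.mulVec := by
    intro h
    have := LinearMap.ker_eq_bot.mp h
    exact this
  apply hker
  have h := LinearMap.finrank_range_add_finrank_ker X.mulVecLin
  rw [Matrix.rank] at hrank
  have hdom : Module.finrank ℝ (Fin p → ℝ) = p := by simp
  have : Module.finrank ℝ (LinearMap.ker X.mulVecLin) = 0 := by omega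
  exact Submodule.finrank_eq_zero.mp this

lemma quad_form_eq {n p : ℕ} (X : Matrix (Fin n) (Fin p) ℝ) (d : Fin n → ℝ)
    (x : Fin p → ℝ) :
    star x ⬝ᵥ ((Xᵀ * Matrix.diagonal d * X) *ᵥ x)
      = ∑ i, d i * (X *ᵥ x) i ^ 2 := by
  rw [show star x = x from rfl, ← Matrix.mulVec_mulVec, ← Matrix.mulVec_mulVec,
    Matrix.dotProduct_mulVec, Matrix.vecMul_transpose]
  simp only [Matrix.mulVec_diagonal, dotProduct, sq]
  exact Finset.sum_congr rfl fun i _ => by ring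

lemma posDef_sandwich {n p : ℕ} (X : Matrix (Fin n) (Fin p) ℝ) (d : Fin n → ℝ)
    (hd : ∀ i, 0 < d i) (hinj : Function.Injective X.mulVec) :
    (Xᵀ * Matrix.diagonal d * X).PosDef := by
  refine Matrix.PosDef.of_dotProduct_mulVec_pos ?_ ?_
  · unfold Matrix.IsHermitian
    rw [Matrix.conjTranspose_eq_transpose_of_trivial, Matrix.transpose_mul,
      Matrix.transpose_mul, Matrix.transpose_transpose, Matrix.diagonal_transpose,
      Matrix.mul_assoc]
  · intro x hx
    rw [quad_form_eq]
    have hy : X *ᵥ x ≠ 0 := by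
      intro h
      exact hx (hinj (by simpa using h))
    obtain ⟨j, hj⟩ := Function.ne_iff.mp hy
    apply Finset.sum_pos'
    · intro i _
      have := hd i
      positivity
    · refine ⟨j, Finset.mem_univ j, ?_⟩
      have h1 := hd j
      exact mul_pos h1 (pow_two_pos_of_ne_zero hj)

lemma posSemidef_sandwich {n p : ℕ} (X : Matrix (Fin n) (Fin p) ℝ) (d : Fin n → ℝ)
    (hd : ∀ i, 0 ≤ d i) : (Xᵀ * Matrix.diagonal d * X).PosSemidef := by
  have h := (Matrix.PosSemidef.diagonal (fun i => hd i) :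
    (Matrix.diagonal d).PosSemidef).conjTranspose_mul_mul_same X
  rwa [Matrix.conjTranspose_eq_transpose_of_trivial] at h

lemma posDef_conj_unit {k : ℕ} {A D : Matrix (Fin k) (Fin k) ℝ}
    (hA : A.PosDef) (hD : D.IsHermitian) (hu : IsUnit D) :
    (D * A * D).PosDef := by
  have hinj : Function.Injective D.mulVec := Matrix.mulVec_injective_iff_isUnit.mpr hu
  refine Matrix.PosDef.of_dotProduct_mulVec_pos ?_ ?_
  · unfold Matrix.IsHermitian at *
    rw [Matrix.conjTranspose_mul, Matrix.conjTranspose_mul, hD]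
    rw [Matrix.conjTranspose_eq_transpose_of_trivial] at hD ⊢
    rw [show Aᵀ = A from hA.isHermitian, Matrix.mul_assoc]
  · intro x hx
    have hy : D *ᵥ x ≠ 0 := by
      intro h; exact hx (hinj (by simpa using h))
    have hDT : Dᵀ = D := by
      rw [← Matrix.conjTranspose_eq_transpose_of_trivial]; exact hD
    have hvm : x ᵥ* D = D *ᵥ x := by rw [← Matrix.vecMul_transpose, hDT]
    have key : star x ⬝ᵥ ((D * A * D) *ᵥ x)
        = star (D *ᵥ x) ⬝ᵥ (A *ᵥ (D *ᵥ x)) := by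
      rw [show star x = x from rfl, show star (D *ᵥ x) = D *ᵥ x from rfl,
        ← Matrix.mulVec_mulVec, ← Matrix.mulVec_mulVec,
        Matrix.dotProduct_mulVec x D (A *ᵥ (D *ᵥ x)), hvm]
    rw [key]
    exact hA.dotProduct_mulVec_pos hy

open scoped MatrixOrder in
lemma inv_sub_inv_psd {k : ℕ} {E V : Matrix (Fin k) (Fin k) ℝ}
    (hE : E.PosDef) (hV : V.PosDef) (hEV : (E - V).PosSemidef) :
    (V⁻¹ - E⁻¹).PosSemidef := by
  have hVi : (V⁻¹).PosDef := hV.inv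
  have hEi : (E⁻¹).PosDef := hE.inv
  set D := CFC.sqrt (V⁻¹) with hDdef
  have hDpsd : D.PosSemidef := Matrix.nonneg_iff_posSemidef.mp (CFC.sqrt_nonneg _)
  have hDD : D * D = V⁻¹ := CFC.sqrt_mul_sqrt_self _ (Matrix.nonneg_iff_posSemidef.mpr hVi.posSemidef)
  have hDherm : D.IsHermitian := hDpsd.isHermitian
  have hDdet : IsUnit D.det := by
    have h1 : D.det * D.det = (V⁻¹).det := by rw [← Matrix.det_mul, hDD]
    have h2 : (V⁻¹).det ≠ 0 := hVi.det_pos.ne'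
    exact isUnit_iff_ne_zero.mpr (fun h => h2 (by rw [← h1, h, mul_zero]))
  have hDu : IsUnit D := (Matrix.isUnit_iff_isUnit_det D).mpr hDdet
  have hVeq : V = D⁻¹ * D⁻¹ := by
    rw [← Matrix.nonsing_inv_nonsing_inv V (isUnit_iff_ne_zero.mpr hV.det_pos.ne'), ← hDD, Matrix.mul_inv_rev]
  have hDVD : D * V * D = 1 := by
    rw [hVeq, Matrix.mul_nonsing_inv_cancel_left _ _ hDdet,
      Matrix.nonsing_inv_mul _ hDdet]
  set N := D * E * D with hNdef
  have hN : N.PosDef := posDef_conj_unit hE hDherm hDu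
  have hNdet : IsUnit N.det := isUnit_iff_ne_zero.mpr hN.det_pos.ne'
  have hNsub : (N - 1).PosSemidef := by
    have h1 : N - 1 = Dᴴ * (E - V) * D := by
      rw [hDherm, hNdef, ← hDVD]; noncomm_ring
    rw [h1]
    exact hEV.conjTranspose_mul_mul_same D
  -- now the sqrt of N⁻¹
  have hNi : (N⁻¹).PosDef := hN.inv
  set C := CFC.sqrt (N⁻¹) with hCdef
  have hCpsd : C.PosSemidef := Matrix.nonneg_iff_posSemidef.mp (CFC.sqrt_nonneg _)
  have hCC : C * C = N⁻¹ := CFC.sqrt_mul_sqrt_self _ (Matrix.nonneg_iff_posSemidef.mpr hNi.posSemidef)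
  have hCherm : C.IsHermitian := hCpsd.isHermitian
  have hCdet : IsUnit C.det := by
    have h1 : C.det * C.det = (N⁻¹).det := by rw [← Matrix.det_mul, hCC]
    have h2 : (N⁻¹).det ≠ 0 := hNi.det_pos.ne'
    exact isUnit_iff_ne_zero.mpr (fun h => h2 (by rw [← h1, h, mul_zero]))
  have hNeq : N = C⁻¹ * C⁻¹ := by
    rw [← Matrix.nonsing_inv_nonsing_inv N hNdet, ← hCC, Matrix.mul_inv_rev]
  have hCNC : C * N * C = 1 := by
    rw [hNeq, Matrix.mul_nonsing_inv_cancel_left _ _ hCdet,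
      Matrix.nonsing_inv_mul _ hCdet]
  have hone : (1 - N⁻¹ : Matrix (Fin k) (Fin k) ℝ).PosSemidef := by
    have h1 : (1 - N⁻¹ : Matrix (Fin k) (Fin k) ℝ) = Cᴴ * (N - 1) * C := by
      rw [hCherm, Matrix.mul_sub, Matrix.mul_one, Matrix.sub_mul, hCNC, hCC]
    rw [h1]
    exact hNsub.conjTranspose_mul_mul_same C
  have hEinv : D * N⁻¹ * D = E⁻¹ := by
    rw [hNdef, Matrix.mul_inv_rev, Matrix.mul_inv_rev,
      Matrix.mul_nonsing_inv_cancel_left _ _ hDdet,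
      Matrix.nonsing_inv_mul_cancel_right _ _ hDdet]
  have hfinal : V⁻¹ - E⁻¹ = Dᴴ * (1 - N⁻¹) * D := by
    rw [hDherm, Matrix.mul_sub, Matrix.mul_one, Matrix.sub_mul, hDD, hEinv]
  rw [hfinal]
  exact hone.conjTranspose_mul_mul_same D

/-- Key matrix comparison in the proof of Theorem 1: if X has full column rank,
sᵢ > 0 and mᵢ > 0, then E = XᵀSW(β)X and V = XᵀSR(β)X are symmetric positive
definite and A = V⁻¹ − E⁻¹ is symmetric positive semidefinite. -/
theorem em_nr_information_matrix_comparison (n p : ℕ)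
    (X : Matrix (Fin n) (Fin p) ℝ) (s m : Fin n → ℝ)
    (hs : ∀ i, 0 < s i) (hm : ∀ i, 0 < m i) (hrank : X.rank = p)
    (β : Fin p → ℝ) :
    let W := Matrix.diagonal fun i => omegaPG ((X *ᵥ β) i) (m i)
    let R := Matrix.diagonal fun i =>
      m i * (piLogit ((X *ᵥ β) i) * (1 - piLogit ((X *ᵥ β) i)))
    (Xᵀ * Matrix.diagonal s * W * X).PosDef ∧
      (Xᵀ * Matrix.diagonal s * R * X).PosDef ∧
      ((Xᵀ * Matrix.diagonal s * R * X)⁻¹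
        - (Xᵀ * Matrix.diagonal s * W * X)⁻¹).PosSemidef := by
  intro W R
  have hinj := mulVec_inj_of_rank X hrank
  have hWeq : Xᵀ * Matrix.diagonal s * W * X
      = Xᵀ * Matrix.diagonal (fun i => s i * omegaPG ((X *ᵥ β) i) (m i)) * X := by
    rw [Matrix.mul_assoc Xᵀ, Matrix.diagonal_mul_diagonal]
  have hReq : Xᵀ * Matrix.diagonal s * R * X
      = Xᵀ * Matrix.diagonal
          (fun i => s i * (m i * (piLogit ((X *ᵥ β) i) * (1 - piLogit ((X *ᵥ β) i))))) * X := by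
    rw [Matrix.mul_assoc Xᵀ, Matrix.diagonal_mul_diagonal]
  have hE : (Xᵀ * Matrix.diagonal s * W * X).PosDef := by
    rw [hWeq]
    exact posDef_sandwich X _ (fun i => mul_pos (hs i) (omegaPG_pos (hm i))) hinj
  have hV : (Xᵀ * Matrix.diagonal s * R * X).PosDef := by
    rw [hReq]
    exact posDef_sandwich X _
      (fun i => mul_pos (hs i) (mul_pos (hm i) (piLogit_mul_pos ((X *ᵥ β) i)))) hinj
  refine ⟨hE, hV, ?_⟩
  apply inv_sub_inv_psd hE hV
  have hsub : Xᵀ * Matrix.diagonal s * W * X - Xᵀ * Matrix.diagonal s * R * X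
      = Xᵀ * Matrix.diagonal
          (fun i => s i * omegaPG ((X *ᵥ β) i) (m i)
            - s i * (m i * (piLogit ((X *ᵥ β) i) * (1 - piLogit ((X *ᵥ β) i))))) * X := by
    rw [hWeq, hReq, ← Matrix.sub_mul, ← Matrix.mul_sub, Matrix.diagonal_sub]
  rw [hsub]
  apply posSemidef_sandwich
  intro i
  have h1 := key_ineq (t := (X *ᵥ β) i) (hm i)
  have h2 := (hs i).le
  nlinarith [mul_le_mul_of_nonneg_left h1 h2]
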